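/- (Consistency of scale mixtures; the 'if' direction of Kano's theorem.) Let N ≥ 1, let Σ ∈ ℝ^{(N+1)×(N+1)} be symmetric positive definite with leading N×N principal submatrix Σ₁₁, let μ = (μ₁, μ_{N+1}) ∈ ℝ^{N+1} with μ₁ ∈ ℝ^N, and let p_ξ be a probability density on (0,∞). Then for every y ∈ ℝ^N, ∫_ℝ p_{μ,Σ}((y, t)) dt = p_{μ₁,Σ₁₁}(y), where p_{μ,Σ} and p_{μ₁,Σ₁₁} are the (N+1)-dimensional and N-dimensional scale-mixture elliptical densities built from the same mixing density p_ξ. That is, the family of scale-mixture elliptical densities with a fixed mixing density is closed under marginalization of the last coordinate. -/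

import Mathlib

open MeasureTheory Matrix Real

lemma snoc_dot {N : ℕ} (a c : Fin N → ℝ) (b d : ℝ) :
    Fin.snoc a b ⬝ᵥ Fin.snoc c d = a ⬝ᵥ c + b * d := by
  simp [dotProduct, Fin.sum_univ_castSucc]

lemma quad_expand {N : ℕ} (T : Matrix (Fin (N+1)) (Fin (N+1)) ℝ)
    (hT : ∀ i j, T i j = T j i) (x : Fin N → ℝ) (s : ℝ) :
    Fin.snoc x s ⬝ᵥ T *ᵥ Fin.snoc x s =
      T (Fin.last N) (Fin.last N) * s ^ 2 +
        2 * (∑ j, T (Fin.last N) j.castSucc * x j) * s +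
        x ⬝ᵥ (T.submatrix Fin.castSucc Fin.castSucc *ᵥ x) := by
  simp only [dotProduct, mulVec, Fin.sum_univ_castSucc, Fin.snoc_castSucc, Fin.snoc_last,
    submatrix_apply]
  have h : ∀ i : Fin N, T i.castSucc (Fin.last N) = T (Fin.last N) i.castSucc := fun i => hT _ _
  simp only [h]
  rw [Finset.sum_congr rfl (fun i _ => by rw [mul_add])]
  rw [Finset.sum_add_distrib]
  ring_nf
  rw [show (∑ i, x i * T (Fin.last N) i.castSucc * s)
      = s * ∑ i, T (Fin.last N) i.castSucc * x i by
    rw [Finset.mul_sum]; exact Finset.sum_congr rfl (fun i _ => by ring)]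
  ring

lemma posdef_diag_pos {n : ℕ} {T : Matrix (Fin n) (Fin n) ℝ} (hT : T.PosDef) (i : Fin n) :
    0 < T i i := by
  have h := hT.dotProduct_mulVec_pos (x := Pi.single i 1) (by
    intro h
    have := congrFun h i
    simp at this)
  have hstar : star (Pi.single i 1 : Fin n → ℝ) = Pi.single i 1 := rfl
  rw [hstar] at h
  simpa [dotProduct, mulVec, Pi.single_apply] using h

lemma posdef_submatrix {N : ℕ} {S : Matrix (Fin (N+1)) (Fin (N+1)) ℝ} (hS : S.PosDef) :
    (S.submatrix Fin.castSucc Fin.castSucc).PosDef := by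
  refine Matrix.PosDef.of_dotProduct_mulVec_pos ?_ ?_
  · have h := hS.1
    rw [Matrix.IsHermitian] at h ⊢
    funext i j
    calc (S.submatrix Fin.castSucc Fin.castSucc)ᴴ i j = star (S j.castSucc i.castSucc) := rfl
      _ = Sᴴ i.castSucc j.castSucc := rfl
      _ = S i.castSucc j.castSucc := by rw [h]
  · intro x hx
    have hsnoc : (Fin.snoc x 0 : Fin (N+1) → ℝ) ≠ 0 := by
      intro h
      apply hx
      funext i
      have := congrFun h i.castSucc
      simpa using this
    have h2 := hS.dotProduct_mulVec_pos hsnoc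
    have hstar : ∀ {n : ℕ} (v : Fin n → ℝ), star v = v := fun v => rfl
    rw [hstar] at h2
    rw [hstar]
    convert h2 using 1
    simp [dotProduct, mulVec, Fin.sum_univ_castSucc]

lemma sym_of_posdef {n : ℕ} {T : Matrix (Fin n) (Fin n) ℝ} (hT : T.PosDef) (i j : Fin n) :
    T i j = T j i := by
  have h := hT.1
  rw [Matrix.IsHermitian] at h
  calc T i j = star (T i j) := rfl
    _ = Tᴴ j i := rfl
    _ = T j i := by rw [h]

lemma quad_complete {N : ℕ} {S : Matrix (Fin (N+1)) (Fin (N+1)) ℝ} (hS : S.PosDef)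
    (x : Fin N → ℝ) (s : ℝ) :
    Fin.snoc x s ⬝ᵥ S⁻¹ *ᵥ Fin.snoc x s =
      S⁻¹ (Fin.last N) (Fin.last N) *
        (s + (∑ j, S⁻¹ (Fin.last N) j.castSucc * x j) / S⁻¹ (Fin.last N) (Fin.last N)) ^ 2 +
      x ⬝ᵥ ((S.submatrix Fin.castSucc Fin.castSucc)⁻¹ *ᵥ x) := by
  have hT : (S⁻¹).PosDef := hS.inv
  set T := S⁻¹ with hTdef
  set α := T (Fin.last N) (Fin.last N) with hαdef
  set β := ∑ j, T (Fin.last N) j.castSucc * x j with hβdef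
  set A := S.submatrix Fin.castSucc Fin.castSucc with hAdef
  have hα : 0 < α := posdef_diag_pos hT _
  have hA : A.PosDef := posdef_submatrix hS
  have hAdet : IsUnit A.det := by
    simp [isUnit_iff_ne_zero, hA.det_pos.ne']
  have hSdet : IsUnit S.det := by
    simp [isUnit_iff_ne_zero, hS.det_pos.ne']
  set v := A⁻¹ *ᵥ x with hvdef
  have hAv : A *ᵥ v = x := by
    rw [hvdef, Matrix.mulVec_mulVec, Matrix.mul_nonsing_inv _ hAdet, Matrix.one_mulVec]
  set s₀ := (S *ᵥ Fin.snoc v 0) (Fin.last N) with hs₀def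
  have hw : S *ᵥ Fin.snoc v 0 = Fin.snoc x s₀ := by
    funext i
    refine Fin.lastCases ?_ ?_ i
    · simp [s₀]
    · intro i
      rw [Fin.snoc_castSucc]
      rw [← hAv]
      simp [mulVec, dotProduct, Fin.sum_univ_castSucc, hAdef]
  have hTw : T *ᵥ Fin.snoc x s₀ = Fin.snoc v 0 := by
    rw [← hw, hTdef, Matrix.mulVec_mulVec, Matrix.nonsing_inv_mul _ hSdet, Matrix.one_mulVec]
  have hlast : β + α * s₀ = 0 := by
    have h0 : (T *ᵥ Fin.snoc x s₀) (Fin.last N) = 0 := by rw [hTw]; simp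
    rw [mulVec, dotProduct, Fin.sum_univ_castSucc] at h0
    simp only [Fin.snoc_castSucc, Fin.snoc_last] at h0
    rw [← h0, hβdef, hαdef]
  have hs₀ : s₀ = -β / α := by
    field_simp
    linarith [hlast]
  have hq0 : Fin.snoc x s₀ ⬝ᵥ T *ᵥ Fin.snoc x s₀ = x ⬝ᵥ v := by
    rw [hTw, snoc_dot, mul_zero, add_zero]
  have hsym : ∀ i j, T i j = T j i := sym_of_posdef hT
  have hE := quad_expand T hsym x
  have hγ : x ⬝ᵥ (T.submatrix Fin.castSucc Fin.castSucc *ᵥ x) = x ⬝ᵥ v + β ^ 2 / α := by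
    have h1 := hE s₀
    rw [hq0, ← hαdef, ← hβdef] at h1
    have hγα : (x ⬝ᵥ (T.submatrix Fin.castSucc Fin.castSucc *ᵥ x)) * α
        = (x ⬝ᵥ v) * α + β ^ 2 := by
      linear_combination (-α) * h1 - (β + α * s₀) * hlast
    field_simp
    linarith [hγα]
  rw [hE s, hγ, ← hαdef, ← hβdef]
  field_simp
  ring

lemma adjugate_last_last {N : ℕ} (S : Matrix (Fin (N+1)) (Fin (N+1)) ℝ) :
    S.adjugate (Fin.last N) (Fin.last N) = (S.submatrix Fin.castSucc Fin.castSucc).det := by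
  rw [Matrix.adjugate_apply, Matrix.det_succ_row _ (Fin.last N)]
  rw [Finset.sum_eq_single (Fin.last N)]
  · simp only [Fin.succAbove_last, Matrix.updateRow_apply, if_pos rfl, Pi.single_eq_same]
    have : (S.updateRow (Fin.last N) (Pi.single (Fin.last N) 1)).submatrix Fin.castSucc Fin.castSucc
        = S.submatrix Fin.castSucc Fin.castSucc := by
      ext i j
      simp [Matrix.updateRow_apply, (Fin.castSucc_lt_last i).ne]
    rw [this]
    simp
  · intro j _ hj
    simp [Matrix.updateRow_apply, Pi.single_apply, hj.symm]
  · simp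

lemma det_mul_inv_last {N : ℕ} {S : Matrix (Fin (N+1)) (Fin (N+1)) ℝ} (hdet : S.det ≠ 0) :
    S.det * S⁻¹ (Fin.last N) (Fin.last N) = (S.submatrix Fin.castSucc Fin.castSucc).det := by
  rw [Matrix.inv_def, Ring.inverse_eq_inv']
  rw [Matrix.smul_apply, adjugate_last_last]
  rw [smul_eq_mul]
  field_simp

lemma gauss_integral {a ξ : ℝ} (ha : 0 < a) (hξ : 0 < ξ) (c m : ℝ) :
    ∫ t : ℝ, Real.exp (-(a * (t - c) ^ 2 + m) / (2 * ξ)) =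
      Real.exp (-m / (2 * ξ)) * Real.sqrt (2 * π * ξ / a) := by
  have hb : 0 < a / (2 * ξ) := by positivity
  have h1 : ∀ t : ℝ, Real.exp (-(a * (t - c) ^ 2 + m) / (2 * ξ))
      = Real.exp (-m / (2 * ξ)) * Real.exp (-(a / (2 * ξ)) * (t - c) ^ 2) := by
    intro t
    rw [← Real.exp_add]
    congr 1
    field_simp
    ring
  simp_rw [h1]
  rw [MeasureTheory.integral_const_mul]
  rw [MeasureTheory.integral_sub_right_eq_self (fun u => Real.exp (-(a / (2 * ξ)) * u ^ 2)) c]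
  rw [integral_gaussian]
  congr 2
  field_simp

lemma rpow_step {N : ℕ} {z a : ℝ} (hz : 0 < z) (ha : 0 < a) :
    z ^ (-(↑(N+1) : ℝ)/2) * Real.sqrt (z / a) = z ^ (-(↑N : ℝ)/2) * a ^ (-(1:ℝ)/2) := by
  rw [Real.sqrt_eq_rpow, Real.div_rpow hz.le ha.le,
    show (-(1:ℝ)/2) = -(1/2) by norm_num, Real.rpow_neg ha.le,
    div_eq_mul_inv (z ^ ((1:ℝ)/2)) (a ^ ((1:ℝ)/2)), ← mul_assoc, ← Real.rpow_add hz]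
  congr 2
  push_cast
  ring

lemma exp_rpow_bound (N : ℕ) {Q : ℝ} (hQ : 0 < Q) :
    ∃ C : ℝ, 0 ≤ C ∧ ∀ ξ : ℝ, 0 < ξ →
      (2 * π * ξ) ^ (-(↑(N+1) : ℝ)/2) * Real.exp (-Q / (2 * ξ)) ≤ C := by
  set n := N + 1 with hn
  have h2π : (0:ℝ) < 2 * π := by positivity
  refine ⟨(2*π) ^ (-(↑n : ℝ)/2) * max 1 ((n.factorial : ℝ) * 2 ^ n / Q ^ n), by positivity, ?_⟩
  intro ξ hξ
  have hneg : -Q / (2 * ξ) = -(Q / (2 * ξ)) := by ring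
  have hsplit : (2 * π * ξ) ^ (-(↑n : ℝ)/2) = (2*π) ^ (-(↑n : ℝ)/2) * ξ ^ (-(↑n : ℝ)/2) :=
    Real.mul_rpow h2π.le hξ.le
  rw [hsplit, mul_assoc, hneg]
  apply mul_le_mul_of_nonneg_left _ (by positivity)
  have hv : 0 < Q / (2 * ξ) := by positivity
  rcases le_or_gt 1 ξ with h1 | h1
  · calc ξ ^ (-(↑n : ℝ)/2) * Real.exp (-(Q / (2 * ξ)))
        ≤ 1 * 1 := by
          apply mul_le_mul
          · apply Real.rpow_le_one_of_one_le_of_nonpos h1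
            have : (0:ℝ) ≤ (n:ℝ)/2 := by positivity
            linarith
          · rw [Real.exp_le_one_iff]
            linarith
          · positivity
          · norm_num
      _ ≤ max 1 ((n.factorial : ℝ) * 2 ^ n / Q ^ n) := by simp
  · have hexp : (Q / (2*ξ)) ^ n / (n.factorial : ℝ) ≤ Real.exp (Q / (2*ξ)) := by
      refine le_trans ?_ (Real.sum_le_exp_of_nonneg hv.le (n+1))
      refine Finset.single_le_sum (f := fun i => (Q/(2*ξ))^i / (i.factorial : ℝ)) ?_ ?_
      · intro i _
        positivity
      · simp
    have hfac : (0:ℝ) < (n.factorial : ℝ) := by positivity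
    have hexpneg : Real.exp (-(Q / (2*ξ))) ≤ (n.factorial : ℝ) * (2*ξ) ^ n / Q ^ n := by
      rw [Real.exp_neg]
      rw [inv_le_comm₀ (Real.exp_pos _) (by positivity)]
      rw [div_pow] at hexp
      have heq : ((n.factorial : ℝ) * (2 * ξ) ^ n / Q ^ n)⁻¹
          = Q ^ n / (2 * ξ) ^ n / (n.factorial : ℝ) := by
        rw [eq_div_iff hfac.ne']
        field_simp
      rw [heq]
      exact hexp
    have hrpow : ξ ^ (-(↑n : ℝ)/2) ≤ (ξ ^ n : ℝ)⁻¹ := by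
      rw [← Real.rpow_natCast ξ n, ← Real.rpow_neg hξ.le]
      apply Real.rpow_le_rpow_of_exponent_ge hξ h1.le
      have : (0:ℝ) ≤ (n:ℝ)/2 := by positivity
      have h2 : (n:ℝ)/2 ≤ (n:ℝ) := by
        have : (0:ℝ) ≤ (n:ℝ) := by positivity
        linarith
      linarith
    calc ξ ^ (-(↑n : ℝ)/2) * Real.exp (-(Q / (2 * ξ)))
        ≤ (ξ ^ n : ℝ)⁻¹ * ((n.factorial : ℝ) * (2*ξ) ^ n / Q ^ n) := by
          apply mul_le_mul hrpow hexpneg (Real.exp_pos _).le (by positivity)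
      _ = (n.factorial : ℝ) * 2 ^ n / Q ^ n := by
          rw [mul_pow]
          field_simp
      _ ≤ max 1 ((n.factorial : ℝ) * 2 ^ n / Q ^ n) := le_max_right _ _

lemma snoc_sub {N : ℕ} (y : Fin N → ℝ) (t : ℝ) (μ : Fin (N+1) → ℝ) :
    Fin.snoc y t - μ = Fin.snoc (fun i => y i - μ i.castSucc) (t - μ (Fin.last N)) := by
  funext i
  refine Fin.lastCases ?_ ?_ i <;> simp


/-- The scale-mixture elliptical density
`p_{μ,Σ}(y) = det(Σ)^{-1/2} ∫₀^∞ (2πξ)^{-N/2} exp(-u(y)/(2ξ)) p_ξ(ξ) dξ`,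
where `u(y) = (y-μ)ᵀ Σ⁻¹ (y-μ)`. -/
noncomputable def ellipticalDensity {N : ℕ} (μ : Fin N → ℝ) (S : Matrix (Fin N) (Fin N) ℝ)
    (pxi : ℝ → ℝ) (y : Fin N → ℝ) : ℝ :=
  S.det ^ (-(1 : ℝ) / 2) *
    ∫ ξ in Set.Ioi (0 : ℝ),
      (2 * π * ξ) ^ (-(N : ℝ) / 2) *
        Real.exp (-((y - μ) ⬝ᵥ (S⁻¹ *ᵥ (y - μ))) / (2 * ξ)) * pxi ξ

/-- scale-mixture elliptical densities with a fixed mixing density are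
closed under marginalization of the last coordinate (the 'if' direction of Kano's theorem). -/
theorem ellipticalDensity_marginal_lastCoord
    {N : ℕ} (hN : 1 ≤ N) (μ : Fin (N + 1) → ℝ)
    (S : Matrix (Fin (N + 1)) (Fin (N + 1)) ℝ) (hS : S.PosDef)
    (pxi : ℝ → ℝ) (hmeas : Measurable pxi)
    (hnonneg : ∀ x, 0 ≤ pxi x) (hzero : ∀ x ≤ (0 : ℝ), pxi x = 0)
    (hone : ∫ x in Set.Ioi (0 : ℝ), pxi x = 1)
    (y : Fin N → ℝ) :
    ∫ t : ℝ, ellipticalDensity μ S pxi (Fin.snoc y t) =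
      ellipticalDensity (fun i => μ i.castSucc)
        (S.submatrix Fin.castSucc Fin.castSucc) pxi y := by
  
  classical
  have hT : (S⁻¹).PosDef := hS.inv
  have hSdet : 0 < S.det := hS.det_pos
  set A := S.submatrix Fin.castSucc Fin.castSucc with hAdef
  have hA : A.PosDef := posdef_submatrix hS
  have hAdet : 0 < A.det := hA.det_pos
  set α := S⁻¹ (Fin.last N) (Fin.last N) with hαdef
  have hα : 0 < α := posdef_diag_pos hT _
  have hdet : S.det * α = A.det := det_mul_inv_last hSdet.ne'
  set x := fun i => y i - μ i.castSucc with hxdef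
  set β := ∑ j, S⁻¹ (Fin.last N) j.castSucc * x j with hβdef
  set m := x ⬝ᵥ A⁻¹ *ᵥ x with hmdef
  have hm : 0 ≤ m := by
    rcases eq_or_ne x 0 with hx0 | hx0
    · simp [hmdef, hx0]
    · have h := hA.inv.dotProduct_mulVec_pos hx0
      have hstar : star x = x := rfl
      rw [hstar] at h
      exact h.le
  set c := μ (Fin.last N) - β / α with hcdef
  have hquad : ∀ t : ℝ,
      (Fin.snoc y t - μ) ⬝ᵥ S⁻¹ *ᵥ (Fin.snoc y t - μ) = α * (t - c) ^ 2 + m := by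
    intro t
    rw [snoc_sub, quad_complete hS x (t - μ (Fin.last N)), ← hαdef, ← hβdef, ← hAdef, ← hmdef]
    have h1 : t - μ (Fin.last N) + β / α = t - c := by rw [hcdef]; ring
    rw [h1]
  -- the inner function
  set f : ℝ → ℝ → ℝ := fun ξ t =>
    (2 * π * ξ) ^ (-(↑(N+1) : ℝ)/2) * Real.exp (-(α * (t - c) ^ 2 + m) / (2 * ξ)) * pxi ξ
    with hfdef
  have hfm : Measurable (Function.uncurry f) := by
    apply Measurable.mul
    apply Measurable.mul
    · fun_prop
    · fun_prop
    · fun_prop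
  have hfnn : ∀ ξ t, 0 ≤ f ξ t := by
    intro ξ t
    rcases le_or_gt ξ 0 with h | h
    · simp [hfdef, hzero ξ h]
    · have h2 : (0:ℝ) ≤ 2 * π * ξ := by positivity
      exact mul_nonneg (mul_nonneg (Real.rpow_nonneg h2 _) (Real.exp_pos _).le) (hnonneg ξ)
  -- pxi is integrable
  have hpint : IntegrableOn pxi (Set.Ioi (0:ℝ)) := by
    by_contra h
    rw [MeasureTheory.integral_undef h] at hone
    norm_num at hone
  -- X t = inner lintegral
  set X : ℝ → ENNReal := fun t => ∫⁻ ξ in Set.Ioi (0:ℝ), ENNReal.ofReal (f ξ t) with hXdef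
  have hXmeas : Measurable X := by
    apply Measurable.lintegral_prod_right (f := fun t ξ => ENNReal.ofReal (f ξ t))
    exact ENNReal.measurable_ofReal.comp (hfm.comp measurable_swap)
  have hLHSpt : ∀ t, ellipticalDensity μ S pxi (Fin.snoc y t)
      = S.det ^ (-(1:ℝ)/2) * (X t).toReal := by
    intro t
    rw [ellipticalDensity, hquad t]
    have hft : (fun ξ => (2 * π * ξ) ^ (-(↑(N+1) : ℝ)/2) *
        Real.exp (-(α * (t - c) ^ 2 + m) / (2 * ξ)) * pxi ξ) = fun ξ => f ξ t := by
      funext ξ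
      rw [hfdef]
    congr 1
    rw [show (∫ ξ in Set.Ioi (0:ℝ), (2 * π * ξ) ^ (-(↑(N+1) : ℝ)/2) *
        Real.exp (-(α * (t - c) ^ 2 + m) / (2 * ξ)) * pxi ξ)
        = ∫ ξ in Set.Ioi (0:ℝ), f ξ t from by rw [hft]]
    rw [integral_eq_lintegral_of_nonneg_ae (ae_of_all _ fun ξ => hfnn ξ t)
      ((hfm.comp (measurable_id.prodMk measurable_const)).aestronglyMeasurable)]
  have hXfin : ∀ᵐ t : ℝ, X t < ⊤ := by
    have hsub : {t : ℝ | ¬ (α * (t - c) ^ 2 + m ≠ 0)} ⊆ {c} := by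
      intro t ht
      simp only [Set.mem_setOf_eq, not_not] at ht
      have h1 : (t - c) ^ 2 = 0 := by nlinarith [sq_nonneg (t - c)]
      have h2 : t - c = 0 := by
        exact pow_eq_zero_iff (two_ne_zero) |>.mp h1
      have h3 : t = c := by linarith
      simp [h3]
    have hae : ∀ᵐ t : ℝ, α * (t - c) ^ 2 + m ≠ 0 := by
      rw [MeasureTheory.ae_iff]
      exact measure_mono_null hsub (measure_singleton c)
    filter_upwards [hae] with t ht
    have hQ : 0 < α * (t - c) ^ 2 + m := by
      have h0 : 0 ≤ α * (t - c) ^ 2 + m := by nlinarith [sq_nonneg (t - c)]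
      exact lt_of_le_of_ne h0 (Ne.symm ht)
    obtain ⟨C, hC0, hC⟩ := exp_rpow_bound N hQ
    have hb : X t ≤ ∫⁻ ξ in Set.Ioi (0:ℝ), ENNReal.ofReal (C * pxi ξ) := by
      apply setLIntegral_mono (by fun_prop)
      intro ξ hξ
      apply ENNReal.ofReal_le_ofReal
      calc f ξ t = ((2 * π * ξ) ^ (-(↑(N+1) : ℝ)/2) *
            Real.exp (-(α * (t - c) ^ 2 + m) / (2 * ξ))) * pxi ξ := by rw [hfdef]
        _ ≤ C * pxi ξ := mul_le_mul_of_nonneg_right (hC ξ hξ) (hnonneg ξ)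
    exact lt_of_le_of_lt hb (hpint.const_mul C).lintegral_lt_top
  have hXint : ∫⁻ t, X t = ∫⁻ ξ in Set.Ioi (0:ℝ), ∫⁻ t, ENNReal.ofReal (f ξ t) :=
    lintegral_lintegral_swap
      ((ENNReal.measurable_ofReal.comp (hfm.comp measurable_swap)).aemeasurable)
  have hinner : ∀ ξ ∈ Set.Ioi (0:ℝ), ∫⁻ t, ENNReal.ofReal (f ξ t)
      = ENNReal.ofReal (α ^ (-(1:ℝ)/2)) *
        ENNReal.ofReal ((2 * π * ξ) ^ (-(↑N : ℝ)/2) * Real.exp (-m / (2 * ξ)) * pxi ξ) := by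
    intro ξ hξ
    rw [Set.mem_Ioi] at hξ
    have hb2 : 0 < α / (2 * ξ) := by positivity
    have hsplit : ∀ t : ℝ, f ξ t =
        ((2 * π * ξ) ^ (-(↑(N+1) : ℝ)/2) * pxi ξ * Real.exp (-m / (2 * ξ))) *
          Real.exp (-(α / (2 * ξ)) * (t - c) ^ 2) := by
      intro t
      simp only [hfdef]
      have he : -(α * (t - c) ^ 2 + m) / (2 * ξ)
          = -m / (2 * ξ) + (-(α / (2 * ξ)) * (t - c) ^ 2) := by
        field_simp
        ring
      rw [he, Real.exp_add]
      ring
    have hint : Integrable (fun t => f ξ t) := by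
      have h2 := ((integrable_exp_neg_mul_sq hb2).comp_sub_right c).const_mul
        ((2 * π * ξ) ^ (-(↑(N+1) : ℝ)/2) * pxi ξ * Real.exp (-m / (2 * ξ)))
      exact h2.congr (ae_of_all _ fun t => ((hsplit t).symm))
    rw [← ofReal_integral_eq_lintegral_ofReal hint (ae_of_all _ fun t => hfnn ξ t)]
    have hI : ∫ t, f ξ t = (2 * π * ξ) ^ (-(↑(N+1) : ℝ)/2) * pxi ξ *
        (Real.exp (-m / (2 * ξ)) * Real.sqrt (2 * π * ξ / α)) := by
      calc ∫ t, f ξ t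
          = ∫ t, ((2 * π * ξ) ^ (-(↑(N+1) : ℝ)/2) * pxi ξ) *
              Real.exp (-(α * (t - c) ^ 2 + m) / (2 * ξ)) := by
            apply integral_congr_ae
            apply ae_of_all
            intro t
            simp only [hfdef]
            ring
        _ = ((2 * π * ξ) ^ (-(↑(N+1) : ℝ)/2) * pxi ξ) *
              ∫ t, Real.exp (-(α * (t - c) ^ 2 + m) / (2 * ξ)) := integral_const_mul _ _
        _ = _ := by
            rw [gauss_integral hα hξ c m]
    rw [hI, ← ENNReal.ofReal_mul (by positivity)]
    congr 1
    have hrs := rpow_step (N := N) (z := 2 * π * ξ) (a := α) (by positivity) hα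
    calc (2 * π * ξ) ^ (-(↑(N+1) : ℝ)/2) * pxi ξ *
          (Real.exp (-m / (2 * ξ)) * Real.sqrt (2 * π * ξ / α))
        = ((2 * π * ξ) ^ (-(↑(N+1) : ℝ)/2) * Real.sqrt (2 * π * ξ / α)) *
            (pxi ξ * Real.exp (-m / (2 * ξ))) := by ring
      _ = ((2 * π * ξ) ^ (-(↑N : ℝ)/2) * α ^ (-(1:ℝ)/2)) *
            (pxi ξ * Real.exp (-m / (2 * ξ))) := by rw [hrs]
      _ = α ^ (-(1:ℝ)/2) * ((2 * π * ξ) ^ (-(↑N : ℝ)/2) * Real.exp (-m / (2 * ξ)) * pxi ξ) := by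
            ring
  have hrnn : ∀ ξ : ℝ, 0 ≤ (2 * π * ξ) ^ (-(↑N : ℝ)/2) * Real.exp (-m / (2 * ξ)) * pxi ξ := by
    intro ξ
    rcases le_or_gt ξ 0 with h | h
    · simp [hzero ξ h]
    · have h2 : (0:ℝ) ≤ 2 * π * ξ := by positivity
      exact mul_nonneg (mul_nonneg (Real.rpow_nonneg h2 _) (Real.exp_pos _).le) (hnonneg ξ)
  have hdetpow : S.det ^ (-(1:ℝ)/2) * α ^ (-(1:ℝ)/2) = A.det ^ (-(1:ℝ)/2) := by
    rw [← hdet, Real.mul_rpow hSdet.le hα.le]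
  calc ∫ t : ℝ, ellipticalDensity μ S pxi (Fin.snoc y t)
      = ∫ t : ℝ, S.det ^ (-(1:ℝ)/2) * (X t).toReal :=
        integral_congr_ae (ae_of_all _ hLHSpt)
    _ = S.det ^ (-(1:ℝ)/2) * ∫ t : ℝ, (X t).toReal := integral_const_mul _ _
    _ = S.det ^ (-(1:ℝ)/2) * (∫⁻ t, X t).toReal := by
        congr 1
        rw [integral_eq_lintegral_of_nonneg_ae (ae_of_all _ fun t => ENNReal.toReal_nonneg)
          hXmeas.ennreal_toReal.aestronglyMeasurable]
        congr 1
        apply lintegral_congr_ae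
        filter_upwards [hXfin] with t ht
        rw [ENNReal.ofReal_toReal ht.ne]
    _ = S.det ^ (-(1:ℝ)/2) * (ENNReal.ofReal (α ^ (-(1:ℝ)/2)) *
          ∫⁻ ξ in Set.Ioi (0:ℝ), ENNReal.ofReal
            ((2 * π * ξ) ^ (-(↑N : ℝ)/2) * Real.exp (-m / (2 * ξ)) * pxi ξ)).toReal := by
        rw [hXint, setLIntegral_congr_fun measurableSet_Ioi hinner,
          lintegral_const_mul' _ _ ENNReal.ofReal_ne_top]
    _ = ellipticalDensity (fun i => μ i.castSucc) A pxi y := by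
        rw [ENNReal.toReal_mul, ENNReal.toReal_ofReal (by positivity)]
        rw [ellipticalDensity]
        have hxy : (y - fun i => μ i.castSucc) = x := rfl
        rw [hxy, ← hmdef]
        have hrm : Measurable fun ξ : ℝ =>
            (2 * π * ξ) ^ (-(↑N : ℝ)/2) * Real.exp (-m / (2 * ξ)) * pxi ξ := by
          apply Measurable.mul
          · apply Measurable.mul <;> fun_prop
          · exact hmeas
        rw [integral_eq_lintegral_of_nonneg_ae (ae_of_all _ hrnn) hrm.aestronglyMeasurable]
        rw [← hdetpow]
        ring
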